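/- With notation as in the basis theorem: if a_1,…,a_{N−n} ∈ k satisfy a_1 m_1 g_{i(1)} + ⋯ + a_{N−n} m_{N−n} g_{i(N−n)} ∈ I(D∖F), then this combination lies in I(D), and consequently a_1 = ⋯ = a_{N−n} = 0. -/

import Mathlib

/-- The vanishing ideal (design ideal) of a set of points in `k^m`. -/
def vanishingIdeal {k : Type*} [Field k] {m : ℕ} (S : Set (Fin m → k)) :
    Ideal (MvPolynomial (Fin m) k) where
  carrier := {f | ∀ ζ ∈ S, MvPolynomial.eval ζ f = 0}
  add_mem' := fun hf hg ζ hζ => by simp [hf ζ hζ, hg ζ hζ]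
  zero_mem' := fun ζ _ => by simp
  smul_mem' := fun c f hf ζ hζ => by simp [smul_eq_mul, hf ζ hζ]


open MvPolynomial

/-- The leading exponent of a polynomial with respect to a monomial order:
the maximum of its support. (For `f = 0` it is `0`.) -/
noncomputable def leadExp {σ : Type*} (mo : MonomialOrder σ) {k : Type*} [Field k]
    (f : MvPolynomial σ k) : σ →₀ ℕ :=
  mo.toSyn.symm (f.support.sup mo.toSyn)

/-- The leading term ideal `LT(I)`: the ideal generated by the leading monomials of
the nonzero elements of `I`. -/
noncomputable def ltIdeal {σ : Type*} (mo : MonomialOrder σ) {k : Type*} [Field k]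
    (I : Ideal (MvPolynomial σ k)) : Ideal (MvPolynomial σ k) :=
  Ideal.span {p | ∃ f ∈ I, f ≠ 0 ∧ p = monomial (leadExp mo f) (1 : k)}

lemma leadExp_mem_support {σ k : Type*} [Field k] (mo : MonomialOrder σ)
    {f : MvPolynomial σ k} (hf : f ≠ 0) : leadExp mo f ∈ f.support := by
  obtain ⟨b, hb, hbeq⟩ := Finset.exists_mem_eq_sup f.support
    (Finset.nonempty_iff_ne_empty.mpr (fun h => hf (MvPolynomial.support_eq_empty.mp h)))
    mo.toSyn
  rw [leadExp, hbeq, AddEquiv.symm_apply_apply]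
  exact hb

lemma le_toSyn_leadExp {σ k : Type*} [Field k] (mo : MonomialOrder σ)
    {f : MvPolynomial σ k} {β : σ →₀ ℕ} (hβ : β ∈ f.support) :
    mo.toSyn β ≤ mo.toSyn (leadExp mo f) := by
  rw [leadExp, AddEquiv.apply_symm_apply]
  exact Finset.le_sup hβ

/-- Linear independence: if a combination `Σ a_j m_j g_{i(j)}` lies in `I(D∖F)`,
then it lies in `I(D)` and all coefficients `a_j` vanish. -/
theorem stmt_11 {k : Type*} [Field k] {v : ℕ} [DecidableEq (Fin v → k)]
    (mo : MonomialOrder (Fin v))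
    (F D : Finset (Fin v → k)) (hFD : F ⊆ D)
    (G : Finset (MvPolynomial (Fin v) k))
    (hG0 : ∀ g ∈ G, g ≠ 0)
    (hGF : ∀ g ∈ G, g ∈ _root_.vanishingIdeal (F : Set (Fin v → k)))
    (hGB : ltIdeal mo (_root_.vanishingIdeal (F : Set (Fin v → k))) =
      Ideal.span {p | ∃ g ∈ G, p = monomial (leadExp mo g) (1 : k)})
    (α : Fin (D.card - F.card) → (Fin v →₀ ℕ))
    (hαinj : Function.Injective α)
    (hαrange : ∀ β : Fin v →₀ ℕ, β ∈ Set.range α ↔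
      (monomial β (1 : k) ∉ ltIdeal mo (_root_.vanishingIdeal (D : Set (Fin v → k))) ∧
       monomial β (1 : k) ∈ ltIdeal mo (_root_.vanishingIdeal (F : Set (Fin v → k)))))
    (gi : Fin (D.card - F.card) → MvPolynomial (Fin v) k)
    (hgi : ∀ j, gi j ∈ G)
    (mexp : Fin (D.card - F.card) → (Fin v →₀ ℕ))
    (hm : ∀ j, α j = mexp j + leadExp mo (gi j)) :
    ∀ a : Fin (D.card - F.card) → k,
      (∑ j, C (a j) * (monomial (mexp j) (1 : k) * gi j)) ∈
          _root_.vanishingIdeal ((D \ F : Finset (Fin v → k)) : Set (Fin v → k)) →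
        (∑ j, C (a j) * (monomial (mexp j) (1 : k) * gi j)) ∈
            _root_.vanishingIdeal (D : Set (Fin v → k)) ∧
          ∀ j, a j = 0 := by
  intro a hsum
  set f : MvPolynomial (Fin v) k := ∑ j, C (a j) * (monomial (mexp j) (1 : k) * gi j) with hfdef
  have hfD : f ∈ _root_.vanishingIdeal (D : Set (Fin v → k)) := by
    intro ζ hζ
    by_cases hζF : ζ ∈ F
    · simp only [hfdef, map_sum, map_mul]
      apply Finset.sum_eq_zero
      intro j _
      rw [hGF (gi j) (hgi j) ζ (by exact_mod_cast hζF)]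
      ring
    · refine hsum ζ ?_
      simp only [Finset.coe_sdiff, Set.mem_diff, Finset.mem_coe]
      exact ⟨by exact_mod_cast hζ, hζF⟩
  refine ⟨hfD, ?_⟩
  by_contra hcon
  push_neg at hcon
  obtain ⟨j0, hj0⟩ := hcon
  classical
  -- the key estimate: any monomial appearing in a term is ≼ the corresponding α j
  have key : ∀ (j : Fin (D.card - F.card)) (β : Fin v →₀ ℕ),
      MvPolynomial.coeff β (C (a j) * (monomial (mexp j) (1 : k) * gi j)) ≠ 0 →
      mo.toSyn β ≤ mo.toSyn (α j) := by
    intro j β hne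
    rw [coeff_C_mul, coeff_monomial_mul'] at hne
    by_cases hle : mexp j ≤ β
    · rw [if_pos hle, one_mul] at hne
      have hsup : β - mexp j ∈ (gi j).support :=
        MvPolynomial.mem_support_iff.mpr (fun h => hne (by rw [h, mul_zero]))
      have h1 : mo.toSyn (β - mexp j) ≤ mo.toSyn (leadExp mo (gi j)) :=
        le_toSyn_leadExp mo hsup
      calc mo.toSyn β = mo.toSyn (mexp j + (β - mexp j)) := by
            rw [add_tsub_cancel_of_le hle]
        _ = mo.toSyn (mexp j) + mo.toSyn (β - mexp j) := by rw [map_add]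
        _ ≤ mo.toSyn (mexp j) + mo.toSyn (leadExp mo (gi j)) := by
            exact add_le_add (le_refl _) h1
        _ = mo.toSyn (α j) := by rw [← map_add, ← hm j]
    · rw [if_neg hle, mul_zero] at hne
      exact absurd rfl hne
  -- choose a maximal α among the nonzero coefficients
  let S : Finset (Fin (D.card - F.card)) := Finset.univ.filter (fun j => a j ≠ 0)
  have hS : S.Nonempty := ⟨j0, by simp [S, hj0]⟩
  obtain ⟨jm, hjmS, hmax⟩ := S.exists_max_image (fun j => mo.toSyn (α j)) hS
  have hajm : a jm ≠ 0 := (Finset.mem_filter.mp hjmS).2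
  have hgjm : gi jm ≠ 0 := hG0 (gi jm) (hgi jm)
  -- the coefficient of f at α jm is nonzero
  have hcoeff : MvPolynomial.coeff (α jm) f =
      a jm * MvPolynomial.coeff (leadExp mo (gi jm)) (gi jm) := by
    rw [hfdef, MvPolynomial.coeff_sum]
    rw [Finset.sum_eq_single jm]
    · rw [coeff_C_mul, coeff_monomial_mul',
        if_pos (by rw [hm jm]; exact le_self_add), one_mul, hm jm, add_tsub_cancel_left]
    · intro j _ hjne
      by_cases haj : a j = 0
      · simp [haj]
      · by_contra hne
        have h1 := key j (α jm) hne
        have h2 := hmax j (Finset.mem_filter.mpr ⟨Finset.mem_univ j, haj⟩)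
        have : mo.toSyn (α j) = mo.toSyn (α jm) := le_antisymm h2 h1
        exact hjne (hαinj (mo.toSyn.injective this))
    · intro h
      exact absurd (Finset.mem_univ jm) h
  have hfcne : MvPolynomial.coeff (α jm) f ≠ 0 := by
    rw [hcoeff]
    exact mul_ne_zero hajm
      (MvPolynomial.mem_support_iff.mp (leadExp_mem_support mo hgjm))
  have hf0 : f ≠ 0 := fun h => hfcne (by rw [h, MvPolynomial.coeff_zero])
  -- leadExp f = α jm
  have hled : leadExp mo f = α jm := by
    have h1 : mo.toSyn (α jm) ≤ mo.toSyn (leadExp mo f) :=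
      le_toSyn_leadExp mo (MvPolynomial.mem_support_iff.mpr hfcne)
    have h2 : mo.toSyn (leadExp mo f) ≤ mo.toSyn (α jm) := by
      have hmem := leadExp_mem_support mo hf0
      have hne : MvPolynomial.coeff (leadExp mo f) f ≠ 0 :=
        MvPolynomial.mem_support_iff.mp hmem
      rw [hfdef, MvPolynomial.coeff_sum] at hne
      obtain ⟨j, _, hj⟩ := Finset.exists_ne_zero_of_sum_ne_zero hne
      calc mo.toSyn (leadExp mo f) ≤ mo.toSyn (α j) := key j _ hj
        _ ≤ mo.toSyn (α jm) := by
            apply hmax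
            refine Finset.mem_filter.mpr ⟨Finset.mem_univ j, fun haj => ?_⟩
            rw [haj, map_zero, zero_mul] at hj
            exact hj rfl
    exact mo.toSyn.injective (le_antisymm h2 h1)
  -- contradiction with hαrange
  have hmemLT : monomial (α jm) (1 : k) ∈
      ltIdeal mo (_root_.vanishingIdeal (D : Set (Fin v → k))) := by
    apply Ideal.subset_span
    exact ⟨f, hfD, hf0, by rw [hled]⟩
  exact ((hαrange (α jm)).mp ⟨jm, rfl⟩).1 hmemLT
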